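/- Let h: ℝ^{n+1} → ℝ be a continuous compactly supported function, v a unit vector, and suppose there is a constant m > 0 such that for every x, the set {t ∈ ℝ : h(x + t v) ≠ 0} has one-dimensional Lebesgue measure at most m. Define g(x) = ∫_{−∞}^0 h(x + t v) dt. Then g is well defined, the directional derivative of g along v equals h, and ‖g‖_∞ ≤ m ‖h‖_∞. More generally, if h is C^j, then |∇^j g(x)| ≤ m sup |∇^j h| for every x. -/

import Mathlib

open MeasureTheory

open Set Filter Metric
open scoped Topology ENNReal RealInnerProductSpace

set_option linter.unusedSectionVars false
set_option linter.unusedVariables false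
set_option maxHeartbeats 1000000

namespace Stmt8Aux

variable {n : ℕ}

local notation "E" => EuclideanSpace ℝ (Fin (n + 1))

variable {W : Type*} [NormedAddCommGroup W] [NormedSpace ℝ W]

/-- If `x + t • v` lies in a ball of radius `R`, then `|t| ≤ ‖x‖ + R`. -/
lemma t_bound {R : ℝ} {v : E} (hv : ‖v‖ = 1) {x : E} {t : ℝ}
    (h : x + t • v ∈ closedBall (0 : E) R) : |t| ≤ ‖x‖ + R := by
  have h1 : ‖x + t • v‖ ≤ R := by simpa [mem_closedBall_zero_iff] using h
  have h2 : ‖t • v‖ = |t| := by simp [norm_smul, hv]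
  have h3 : ‖t • v‖ ≤ ‖x + t • v‖ + ‖x‖ := by
    have := norm_sub_le (x + t • v) x
    simpa using this
  linarith

lemma line_hasCompactSupport (F : E → W) (hsupp : HasCompactSupport F)
    {v : E} (hv : ‖v‖ = 1) (x : E) :
    HasCompactSupport fun t : ℝ => F (x + t • v) := by
  obtain ⟨R, hR⟩ := hsupp.isBounded.subset_closedBall 0
  have hsub : tsupport (fun t : ℝ => F (x + t • v)) ⊆ Icc (-(‖x‖ + R)) (‖x‖ + R) := by
    have h1 : Function.support (fun t : ℝ => F (x + t • v)) ⊆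
        {t : ℝ | x + t • v ∈ tsupport F} := by
      intro t ht
      exact subset_tsupport F ht
    have h2 : IsClosed {t : ℝ | x + t • v ∈ tsupport F} :=
      (isClosed_tsupport F).preimage (by continuity)
    refine (closure_minimal h1 h2).trans ?_
    intro t ht
    have := t_bound hv (hR (ht : x + t • v ∈ tsupport F))
    rw [mem_Icc]
    constructor <;> [linarith [neg_abs_le t]; linarith [le_abs_self t]]
  exact IsCompact.of_isClosed_subset (isCompact_Icc) (isClosed_tsupport _) hsub

lemma line_integrable (F : E → W) (hcont : Continuous F) (hsupp : HasCompactSupport F)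
    {v : E} (hv : ‖v‖ = 1) (x : E) :
    Integrable (fun t : ℝ => F (x + t • v)) := by
  have hc : Continuous fun t : ℝ => F (x + t • v) := hcont.comp (by continuity)
  exact hc.integrable_of_hasCompactSupport (line_hasCompactSupport F hsupp hv x)

lemma norm_le_sSup (F : E → W) (hcont : Continuous F) (hsupp : HasCompactSupport F) (y : E) :
    ‖F y‖ ≤ sSup (Set.range fun z => ‖F z‖) := by
  obtain ⟨C, hC⟩ := hsupp.exists_bound_of_continuous hcont
  exact le_csSup ⟨C, by rintro r ⟨z, rfl⟩; exact hC z⟩ ⟨y, rfl⟩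

lemma L2 [CompleteSpace W] (F : E → W) (hcont : Continuous F) (hsupp : HasCompactSupport F)
    (x : E) {v : E} (hv : ‖v‖ = 1) {m : ℝ} (hm : 0 ≤ m)
    (hline : volume {t : ℝ | F (x + t • v) ≠ 0} ≤ ENNReal.ofReal m) :
    ‖∫ t in Set.Iio (0:ℝ), F (x + t • v)‖ ≤ m * sSup (Set.range fun y => ‖F y‖) := by
  set M := sSup (Set.range fun y => ‖F y‖) with hM
  have hMb : ∀ y, ‖F y‖ ≤ M := norm_le_sSup F hcont hsupp
  have hM0 : 0 ≤ M := le_trans (norm_nonneg (F x)) (hMb x)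
  set S := {t : ℝ | F (x + t • v) ≠ 0} with hS
  have hSm : MeasurableSet S := by
    have : IsOpen S := isOpen_compl_singleton.preimage (hcont.comp (by continuity))
    exact this.measurableSet
  have h1 : ∫ t in Set.Iio (0:ℝ), F (x + t • v)
      = ∫ t in Set.Iio (0:ℝ), S.indicator (fun t => F (x + t • v)) t := by
    refine setIntegral_congr_fun measurableSet_Iio fun t _ => ?_
    by_cases h : t ∈ S
    · rw [Set.indicator_of_mem h]
    · rw [Set.indicator_of_notMem h]
      simpa [hS, not_not] using h
  rw [h1, setIntegral_indicator hSm]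
  have hfin : volume (Set.Iio (0:ℝ) ∩ S) < ⊤ :=
    lt_of_le_of_lt (le_trans (measure_mono inter_subset_right) hline) ENNReal.ofReal_lt_top
  calc ‖∫ t in Set.Iio (0:ℝ) ∩ S, F (x + t • v)‖
      ≤ M * (volume (Set.Iio (0:ℝ) ∩ S)).toReal :=
        norm_setIntegral_le_of_norm_le_const hfin
          fun t _ => hMb _
    _ ≤ M * m := by
        refine mul_le_mul_of_nonneg_left ?_ hM0
        exact ENNReal.toReal_le_of_le_ofReal hm
          (le_trans (measure_mono inter_subset_right) hline)
    _ = m * M := mul_comm _ _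

lemma L3 [CompleteSpace W] (F : E → W) (hF : ContDiff ℝ 1 F) (hsupp : HasCompactSupport F)
    {v : E} (hv : ‖v‖ = 1) (x₀ : E) :
    HasFDerivAt (fun y : E => ∫ t in Set.Iio (0:ℝ), F (y + t • v))
      (∫ t in Set.Iio (0:ℝ), fderiv ℝ F (x₀ + t • v)) x₀ := by
  obtain ⟨R, hR⟩ := hsupp.isBounded.subset_closedBall 0
  have hdc : Continuous (fderiv ℝ F) :=
    (hF.fderiv_right (m := 0) (by norm_num)).continuous
  obtain ⟨C, hC⟩ := (hsupp.fderiv (𝕜 := ℝ)).exists_bound_of_continuous hdc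
  have hC0 : 0 ≤ C := le_trans (norm_nonneg _) (hC x₀)
  set bound : ℝ → ℝ := (closedBall (0:ℝ) (‖x₀‖ + 1 + R)).indicator fun _ => C with hbound
  refine hasFDerivAt_integral_of_dominated_of_fderiv_le
    (F := fun y t => F (y + t • v)) (F' := fun y t => fderiv ℝ F (y + t • v))
    (bound := bound) (s := ball x₀ 1) (ball_mem_nhds x₀ one_pos) ?_ ?_ ?_ ?_ ?_ ?_
  · exact Eventually.of_forall fun y =>
      ((hF.continuous.comp (by continuity)).aestronglyMeasurable).restrict
  · exact (line_integrable F hF.continuous hsupp hv x₀).integrableOn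
  · haveI : SecondCountableTopologyEither ℝ (E →L[ℝ] W) := ⟨Or.inl inferInstance⟩
    exact ((hdc.comp (by continuity)).aestronglyMeasurable).restrict
  · refine Eventually.of_forall fun t => fun y hy => ?_
    by_cases h : y + t • v ∈ tsupport F
    · have ht : t ∈ closedBall (0:ℝ) (‖x₀‖ + 1 + R) := by
        have h1 : |t| ≤ ‖y‖ + R := t_bound hv (hR h)
        have h2 : ‖y‖ ≤ ‖x₀‖ + 1 := by
          have h4 := mem_ball_iff_norm.mp hy
          have h3 : ‖y‖ - ‖x₀‖ ≤ ‖y - x₀‖ := norm_sub_norm_le y x₀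
          linarith
        simp only [Metric.mem_closedBall, Real.dist_eq, sub_zero]
        linarith
      rw [hbound, Set.indicator_of_mem ht]
      exact hC _
    · have h0 : fderiv ℝ F (y + t • v) = 0 := by
        have hns : y + t • v ∉ Function.support (fderiv ℝ F) :=
          fun hmem => h (support_fderiv_subset ℝ hmem)
        simpa [Function.mem_support, not_not] using hns
      show ‖fderiv ℝ F (y + t • v)‖ ≤ bound t
      rw [h0]
      simp only [norm_zero]
      exact Set.indicator_nonneg (fun _ _ => hC0) _
  · refine Integrable.restrict (μ := volume) ?_
    rw [hbound, integrable_indicator_iff measurableSet_closedBall]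
    exact integrableOn_const measure_closedBall_lt_top.ne
  · refine Eventually.of_forall fun t => fun y hy => ?_
    have h1 : HasFDerivAt F (fderiv ℝ F (y + t • v)) (y + t • v) :=
      ((hF.differentiable one_ne_zero) (y + t • v)).hasFDerivAt
    have h2 : HasFDerivAt (fun z : E => z + t • v) (ContinuousLinearMap.id ℝ _) y :=
      (hasFDerivAt_id y).add_const (t • v)
    have h3 := h1.comp y h2
    rw [ContinuousLinearMap.comp_id] at h3
    exact h3

lemma L4 {v : E} (hv : ‖v‖ = 1) (j : ℕ) :
    ∀ (W : Type) [NormedAddCommGroup W] [NormedSpace ℝ W] [CompleteSpace W]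
      (F : E → W), ContDiff ℝ j F → HasCompactSupport F → ∀ x : E,
      iteratedFDeriv ℝ j (fun y : E => ∫ t in Set.Iio (0:ℝ), F (y + t • v)) x
        = ∫ t in Set.Iio (0:ℝ), iteratedFDeriv ℝ j F (x + t • v) := by
  induction j with
  | zero =>
    intro W _ _ _ F hF hsupp x
    have key := ((continuousMultilinearCurryFin0 ℝ E W).symm.toLinearIsometry.integral_comp_comm
      (μ := volume.restrict (Set.Iio (0:ℝ))) (fun t : ℝ => F (x + t • v)))
    rw [iteratedFDeriv_zero_eq_comp]
    simp only [Function.comp_apply]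
    have h2 : (fun t : ℝ => iteratedFDeriv ℝ 0 F (x + t • v))
        = fun t : ℝ =>
          (continuousMultilinearCurryFin0 ℝ E W).symm.toLinearIsometry (F (x + t • v)) := by
      funext t; rw [iteratedFDeriv_zero_eq_comp]; rfl
    rw [h2, key]
    rfl
  | succ j IH =>
    intro W _ _ _ F hF hsupp x
    have h1 : ContDiff ℝ 1 F := hF.of_le (by exact_mod_cast Nat.succ_le_succ (Nat.zero_le j))
    have hdF : ContDiff ℝ j (fderiv ℝ F) := hF.fderiv_right (by exact_mod_cast le_rfl)
    have hsF : HasCompactSupport (fderiv ℝ F) := hsupp.fderiv (𝕜 := ℝ)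
    have hfd : (fun y : E => fderiv ℝ (fun z : E => ∫ t in Set.Iio (0:ℝ), F (z + t • v)) y)
        = fun y : E => ∫ t in Set.Iio (0:ℝ), fderiv ℝ F (y + t • v) :=
      funext fun y => (L3 F h1 hsupp hv y).fderiv
    rw [iteratedFDeriv_succ_eq_comp_right]
    simp only [Function.comp_apply]
    rw [hfd, IH (E →L[ℝ] W) (fderiv ℝ F) hdF hsF x]
    have key := ((continuousMultilinearCurryRightEquiv' ℝ j E W).symm.toLinearIsometry.integral_comp_comm
      (μ := volume.restrict (Set.Iio (0:ℝ)))
      (fun t : ℝ => iteratedFDeriv ℝ j (fderiv ℝ F) (x + t • v)))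
    have h3 : (fun t : ℝ => iteratedFDeriv ℝ (j+1) F (x + t • v))
        = fun t : ℝ => (continuousMultilinearCurryRightEquiv' ℝ j E W).symm.toLinearIsometry
          (iteratedFDeriv ℝ j (fderiv ℝ F) (x + t • v)) := by
      funext t; rw [iteratedFDeriv_succ_eq_comp_right]; rfl
    rw [h3, key]
    rfl

lemma L5 [CompleteSpace W] (F : E → W) (hcont : Continuous F) (hsupp : HasCompactSupport F)
    {v : E} (hv : ‖v‖ = 1) :
    Continuous fun x : E => ∫ t in Set.Iio (0:ℝ), F (x + t • v) := by
  rw [continuous_iff_continuousAt]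
  intro x₀
  obtain ⟨R, hR⟩ := hsupp.isBounded.subset_closedBall 0
  obtain ⟨C, hC⟩ := hsupp.exists_bound_of_continuous hcont
  have hC0 : 0 ≤ C := le_trans (norm_nonneg _) (hC 0)
  set bound : ℝ → ℝ := (closedBall (0:ℝ) (‖x₀‖ + 1 + R)).indicator fun _ => C with hbound
  refine continuousAt_of_dominated (bound := bound) ?_ ?_ ?_ ?_
  · exact Eventually.of_forall fun y =>
      ((hcont.comp (by continuity)).aestronglyMeasurable).restrict
  · refine eventually_of_mem (Metric.ball_mem_nhds x₀ one_pos) fun y hy => ?_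
    refine Eventually.of_forall fun t => ?_
    by_cases h : y + t • v ∈ tsupport F
    · have ht : t ∈ closedBall (0:ℝ) (‖x₀‖ + 1 + R) := by
        have h1 : |t| ≤ ‖y‖ + R := t_bound hv (hR h)
        have h4 := mem_ball_iff_norm.mp hy
        have h3 : ‖y‖ - ‖x₀‖ ≤ ‖y - x₀‖ := norm_sub_norm_le y x₀
        simp only [Metric.mem_closedBall, Real.dist_eq, sub_zero]
        linarith
      rw [hbound, Set.indicator_of_mem ht]
      exact hC _
    · rw [image_eq_zero_of_notMem_tsupport h]
      simpa using Set.indicator_nonneg (fun _ _ => hC0) t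
  · refine Integrable.restrict (μ := volume) ?_
    rw [hbound, integrable_indicator_iff measurableSet_closedBall]
    exact integrableOn_const measure_closedBall_lt_top.ne
  · exact Eventually.of_forall fun t => (hcont.comp (by continuity)).continuousAt

/-- Slab volume estimate. -/
lemma slab (b : E) (hb : ‖b‖ = 1) {ε r : ℝ} (hε : 0 ≤ ε) (hr : 0 ≤ r) :
    volume {z : E | |⟪b, z⟫| ≤ ε * r ∧ ‖z‖ ≤ r}
      ≤ ENNReal.ofReal (2 * (ε * r)) * ENNReal.ofReal (2 * r) ^ n := by
  have hcard : Module.finrank ℝ E = Fintype.card (Fin (n+1)) := by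
    simp [finrank_euclideanSpace_fin]
  have horth : Orthonormal ℝ (({0} : Set (Fin (n+1))).restrict fun _ => b) := by
    constructor
    · intro i
      simpa [Set.restrict] using hb
    · rintro ⟨i, hi⟩ ⟨j, hj⟩ hij
      exact absurd (Subtype.ext ((Set.mem_singleton_iff.mp hi).trans
        (Set.mem_singleton_iff.mp hj).symm)) hij
  obtain ⟨B, hB⟩ := horth.exists_orthonormalBasis_extension_of_card_eq hcard
  have hB0 : B 0 = b := hB 0 rfl
  set Φ : E → (Fin (n+1) → ℝ) :=
    fun z => (MeasurableEquiv.toLp 2 (Fin (n+1) → ℝ)).symm (B.repr z) with hΦ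
  have hmp : MeasurePreserving Φ volume volume :=
    (EuclideanSpace.volume_preserving_symm_measurableEquiv_toLp (Fin (n+1))).comp B.measurePreserving_repr
  set w : Fin (n+1) → ℝ := fun i => if i = 0 then ε * r else r with hw
  set T : Set (Fin (n+1) → ℝ) := Set.pi Set.univ fun i => Icc (-(w i)) (w i) with hT
  have hTm : MeasurableSet T := MeasurableSet.univ_pi fun i => measurableSet_Icc
  have hco : ∀ (z : E) (i : Fin (n+1)), Φ z i = ⟪B i, z⟫ := by
    intro z i
    have : Φ z i = B.repr z i := rfl
    rw [this, B.repr_apply_apply]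
  have hsub : {z : E | |⟪b, z⟫| ≤ ε * r ∧ ‖z‖ ≤ r} ⊆ Φ ⁻¹' T := by
    rintro z ⟨h1, h2⟩
    intro i _
    show Φ z i ∈ Icc (-(w i)) (w i)
    rw [Set.mem_Icc, hco z i]
    by_cases hi : i = 0
    · subst hi
      rw [hB0]
      have h3 := abs_le.mp h1
      have hww : w 0 = ε * r := by simp [hw]
      rw [hww]
      exact h3
    · have hBi : ‖B i‖ = 1 := B.orthonormal.1 i
      have hcs := abs_real_inner_le_norm (B i) z
      rw [hBi, one_mul] at hcs
      have h3 := abs_le.mp (hcs.trans h2)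
      have hww : w i = r := by simp [hw, hi]
      rw [hww]
      exact h3
  calc volume {z : E | |⟪b, z⟫| ≤ ε * r ∧ ‖z‖ ≤ r} ≤ volume (Φ ⁻¹' T) := measure_mono hsub
    _ = volume T := hmp.measure_preimage hTm.nullMeasurableSet
    _ = ∏ i, volume (Icc (-(w i)) (w i)) := volume_pi_pi _
    _ = ∏ i : Fin (n+1), ENNReal.ofReal (2 * w i) := by
        refine Finset.prod_congr rfl fun i _ => ?_
        rw [Real.volume_Icc]
        congr 1; ring
    _ = ENNReal.ofReal (2 * (ε * r)) * ENNReal.ofReal (2 * r) ^ n := by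
        rw [Fin.prod_univ_succ]
        have h0 : w 0 = ε * r := by simp [hw]
        have hss : ∀ i : Fin n, ENNReal.ofReal (2 * w i.succ) = ENNReal.ofReal (2 * r) := by
          intro i
          have : w i.succ = r := by simp [hw, Fin.succ_ne_zero]
          rw [this]
        rw [h0, Finset.prod_congr rfl fun i _ => hss i, Finset.prod_const,
          Finset.card_univ, Fintype.card_fin]

/-- Density-point obstruction. -/
lemma L6a {f : E → ℝ} {L : E →L[ℝ] ℝ} {p : E} (hf : HasFDerivAt f L p) (hL : L ≠ 0)
    (hp : f p = 0) {Z : Set E} (hZ : ∀ y ∈ Z, f y = 0) :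
    ¬ Tendsto (fun r => volume (Z ∩ closedBall p r) / volume (closedBall p r))
      (𝓝[>] (0:ℝ)) (𝓝 1) := by
  intro htend
  set a : E := (InnerProductSpace.toDual ℝ E).symm L with ha
  have hinner : ∀ y : E, ⟪a, y⟫ = L y := fun y => InnerProductSpace.toDual_symm_apply
  have ha0 : a ≠ 0 := by
    intro h0
    apply hL
    ext y
    have h1 := hinner y
    rw [h0, inner_zero_left] at h1
    simpa using h1.symm
  have hna : 0 < ‖a‖ := norm_pos_iff.mpr ha0
  set b : E := ‖a‖⁻¹ • a with hbdef
  have hb : ‖b‖ = 1 := norm_smul_inv_norm ha0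
  set V : ℝ≥0∞ := volume (ball (0:E) 1) with hV
  have hV0 : V ≠ 0 := (measure_ball_pos _ _ one_pos).ne'
  have hVtop : V ≠ ⊤ := measure_ball_lt_top.ne
  set Vr : ℝ := V.toReal with hVrdef
  have hVrpos : 0 < Vr := ENNReal.toReal_pos hV0 hVtop
  set ε : ℝ := Vr / 2 ^ (n + 3) with hεdef
  have hεpos : 0 < ε := by rw [hεdef]; exact div_pos hVrpos (by positivity)
  have hlil := hf.isLittleO.def (show (0:ℝ) < ε * ‖a‖ by positivity)
  rw [Metric.eventually_nhds_iff] at hlil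
  obtain ⟨δ, hδpos, hδ⟩ := hlil
  have hq : Module.finrank ℝ E = n + 1 := finrank_euclideanSpace_fin
  have key : ∀ r : ℝ, 0 < r → r < δ →
      volume (Z ∩ closedBall p r) ≤ 2⁻¹ * volume (closedBall p r) := by
    intro r hr hrδ
    have hsub : Z ∩ closedBall p r
        ⊆ (fun y : E => y + (-p)) ⁻¹' {z : E | |⟪b, z⟫| ≤ ε * r ∧ ‖z‖ ≤ r} := by
      rintro y ⟨hyZ, hyB⟩
      have hyr : ‖y - p‖ ≤ r := by
        have := mem_closedBall.mp hyB; rwa [dist_eq_norm] at this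
      have hylt : dist y p < δ := by
        rw [dist_eq_norm]; linarith
      have h1 := hδ hylt
      rw [hZ y hyZ, hp] at h1
      simp only [zero_sub, sub_zero, norm_neg] at h1
      have hLb : |L (y - p)| ≤ ε * ‖a‖ * r := by
        have h2 : ‖L (y - p)‖ ≤ ε * ‖a‖ * r := by
          refine h1.trans ?_
          have h3 : 0 ≤ ε * ‖a‖ := by positivity
          nlinarith
        simpa [Real.norm_eq_abs] using h2
      have hsb : y + -p = y - p := (sub_eq_add_neg y p).symm
      show |⟪b, y + -p⟫| ≤ ε * r ∧ ‖y + -p‖ ≤ r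
      constructor
      · have h2 : ⟪b, y + -p⟫ = ‖a‖⁻¹ * L (y - p) := by
          rw [hsb, hbdef, real_inner_smul_left, hinner]
        rw [h2, abs_mul, abs_inv, abs_norm]
        calc ‖a‖⁻¹ * |L (y - p)| ≤ ‖a‖⁻¹ * (ε * ‖a‖ * r) :=
              mul_le_mul_of_nonneg_left hLb (inv_nonneg.mpr (norm_nonneg a))
          _ = ε * r := by field_simp
      · rw [hsb]
        exact hyr
    have hcb : volume (closedBall p r) = ENNReal.ofReal (r ^ (n+1)) * V := by
      rw [Measure.addHaar_closedBall volume p hr.le, hq]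
    calc volume (Z ∩ closedBall p r)
        ≤ volume ((fun y : E => y + (-p)) ⁻¹' {z : E | |⟪b, z⟫| ≤ ε * r ∧ ‖z‖ ≤ r}) :=
          measure_mono hsub
      _ = volume {z : E | |⟪b, z⟫| ≤ ε * r ∧ ‖z‖ ≤ r} := measure_preimage_add_right _ _ _
      _ ≤ ENNReal.ofReal (2 * (ε * r)) * ENNReal.ofReal (2 * r) ^ n := slab b hb hεpos.le hr.le
      _ ≤ 2⁻¹ * volume (closedBall p r) := by
          rw [hcb, ← ENNReal.ofReal_pow (by linarith : (0:ℝ) ≤ 2*r),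
            ← ENNReal.ofReal_mul (by positivity)]
          rw [← ENNReal.ofReal_toReal hVtop, ← hVrdef]
          rw [show ((2:ℝ≥0∞))⁻¹ = ENNReal.ofReal 2⁻¹ by
            rw [ENNReal.ofReal_inv_of_pos two_pos, ENNReal.ofReal_ofNat]]
          rw [← ENNReal.ofReal_mul (by positivity), ← ENNReal.ofReal_mul (by norm_num)]
          apply ENNReal.ofReal_le_ofReal
          have hrs : (0:ℝ) ≤ r ^ (n+1) := by positivity
          calc (2:ℝ) * (ε * r) * (2*r)^n = 2^(n+1) * ε * r^(n+1) := by
                rw [mul_pow]; ring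
            _ = Vr * r^(n+1) / 4 := by
                rw [hεdef]; field_simp; ring
            _ ≤ 2⁻¹ * (r^(n+1) * Vr) := by nlinarith
  have hev : ∀ᶠ r in 𝓝[>] (0:ℝ),
      volume (Z ∩ closedBall p r) / volume (closedBall p r) ≤ 2⁻¹ := by
    filter_upwards [Ioo_mem_nhdsGT_of_mem (⟨le_refl (0:ℝ), hδpos⟩ : (0:ℝ) ∈ Ico (0:ℝ) δ)]
      with r hrm
    have hk := key r hrm.1 hrm.2
    have hcb0 : volume (closedBall p r) ≠ 0 := (measure_closedBall_pos volume p hrm.1).ne'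
    have hcbt : volume (closedBall p r) ≠ ⊤ := measure_closedBall_lt_top.ne
    calc volume (Z ∩ closedBall p r) / volume (closedBall p r)
        ≤ (2⁻¹ * volume (closedBall p r)) / volume (closedBall p r) :=
          ENNReal.div_le_div_right hk _
      _ = 2⁻¹ := by
          rw [mul_div_assoc, ENNReal.div_self hcb0 hcbt, mul_one]
  have hle : (1:ℝ≥0∞) ≤ 2⁻¹ := le_of_tendsto htend hev
  have hlt : ((2:ℝ≥0∞))⁻¹ < 1 := by
    rw [ENNReal.inv_lt_one]
    exact ENNReal.one_lt_two
  exact absurd hle (not_le.mpr hlt)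

lemma L6v (F : E → W) (hF : ContDiff ℝ 1 F) :
    volume {p : E | F p = 0 ∧ fderiv ℝ F p ≠ 0} = 0 := by
  set Z : Set E := {p : E | F p = 0} with hZdef
  have hZc : IsClosed Z := isClosed_eq hF.continuous continuous_const
  have hae := Besicovitch.ae_tendsto_measure_inter_div (volume : Measure E) Z
  rw [ae_iff] at hae
  have hsub : {p : E | F p = 0 ∧ fderiv ℝ F p ≠ 0}
      ⊆ {x : E | ¬ Tendsto (fun r => volume (Z ∩ closedBall x r) / volume (closedBall x r))
          (𝓝[>] (0:ℝ)) (𝓝 1)} ∩ Z := by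
    rintro p ⟨hp0, hpd⟩
    refine ⟨?_, hp0⟩
    obtain ⟨u, hu⟩ : ∃ u, fderiv ℝ F p u ≠ 0 := by
      by_contra hno; push_neg at hno
      exact hpd (ContinuousLinearMap.ext fun u => by simpa using hno u)
    obtain ⟨ζ, hζ1, hζ2⟩ := exists_dual_vector ℝ (fderiv ℝ F p u) (norm_ne_zero_iff.mpr hu)
    have hfd : HasFDerivAt (fun y => ζ (F y)) (ζ.comp (fderiv ℝ F p)) p :=
      ζ.hasFDerivAt.comp p ((hF.differentiable one_ne_zero p).hasFDerivAt)
    have hLne : ζ.comp (fderiv ℝ F p) ≠ 0 := by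
      intro hzero
      have h0 : ζ (fderiv ℝ F p u) = 0 := by
        have := DFunLike.congr_fun hzero u; simpa using this
      rw [hζ2] at h0
      exact hu (by simpa [norm_eq_zero] using h0)
    exact L6a hfd hLne (by simp [hp0]) (fun y hy => by simp [show F y = 0 from hy])
  refine measure_mono_null hsub ?_
  rwa [Measure.restrict_apply' hZc.measurableSet] at hae

lemma L7 (h : E → ℝ) (j : ℕ) (hh : ContDiff ℝ j h) :
    volume {p : E | h p = 0 ∧ ∃ k ≤ j, iteratedFDeriv ℝ k h p ≠ 0} = 0 := by
  have hsub : {p : E | h p = 0 ∧ ∃ k ≤ j, iteratedFDeriv ℝ k h p ≠ 0}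
      ⊆ ⋃ k ∈ Finset.range j,
        {p : E | iteratedFDeriv ℝ k h p = 0 ∧ fderiv ℝ (iteratedFDeriv ℝ k h) p ≠ 0} := by
    classical
    rintro p ⟨hp0, k, hkj, hk⟩
    have hex : ∃ i, iteratedFDeriv ℝ i h p ≠ 0 := ⟨k, hk⟩
    have hk0pos : Nat.find hex ≠ 0 := by
      intro h0
      have h00 : iteratedFDeriv ℝ 0 h p = 0 := by
        ext m; simp [hp0]
      have hsp := Nat.find_spec hex
      rw [h0] at hsp
      exact hsp h00
    obtain ⟨k', hk'⟩ := Nat.exists_eq_succ_of_ne_zero hk0pos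
    have hprev : iteratedFDeriv ℝ k' h p = 0 := by
      have := Nat.find_min hex (m := k') (by omega)
      simpa [not_not] using this
    have hsucc : iteratedFDeriv ℝ (k'+1) h p ≠ 0 := by
      have := Nat.find_spec hex; rwa [hk'] at this
    have hklt : k' < j := by
      have := Nat.find_min' hex hk; omega
    have hfderiv : fderiv ℝ (iteratedFDeriv ℝ k' h) p ≠ 0 := by
      intro h0
      apply hsucc
      have heq : iteratedFDeriv ℝ (k'+1) h p
          = (continuousMultilinearCurryLeftEquiv ℝ (fun _ : Fin (k'+1) => E) ℝ).symm
            (fderiv ℝ (iteratedFDeriv ℝ k' h) p) := by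
        rw [iteratedFDeriv_succ_eq_comp_left]; rfl
      rw [heq, h0]
      exact (continuousMultilinearCurryLeftEquiv ℝ (fun _ : Fin (k'+1) => E) ℝ).symm.map_zero
    exact Set.mem_biUnion (Finset.mem_coe.mpr (Finset.mem_range.mpr hklt)) ⟨hprev, hfderiv⟩
  refine measure_mono_null hsub ?_
  refine (measure_biUnion_null_iff (Finset.range j).countable_toSet).mpr fun k hk => ?_
  have hk1 : ContDiff ℝ 1 (iteratedFDeriv ℝ k h) := by
    refine hh.iteratedFDeriv_right ?_
    have hklt : (k : ℕ) < j := Finset.mem_range.mp (Finset.mem_coe.mp hk)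
    exact_mod_cast (show 1 + k ≤ j by omega)
  exact L6v _ hk1

lemma L8 (S : Set E) (hS : MeasurableSet S) (h0 : volume S = 0) (v : E) :
    ∀ᵐ x : E, volume {t : ℝ | x + t • v ∈ S} = 0 := by
  have hmap : Measurable fun q : ℝ × E => q.2 + q.1 • v :=
    measurable_snd.add (measurable_fst.smul_const v)
  set A : Set (ℝ × E) := (fun q : ℝ × E => q.2 + q.1 • v) ⁻¹' S with hA
  have hAm : MeasurableSet A := hmap hS
  have hprod : ((volume : Measure ℝ).prod (volume : Measure E)) A = 0 := by
    rw [Measure.prod_apply hAm]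
    have hz : ∀ t : ℝ, (volume : Measure E) (Prod.mk t ⁻¹' A) = 0 := by
      intro t
      have he : Prod.mk t ⁻¹' A = (fun x : E => x + t • v) ⁻¹' S := rfl
      rw [he, measure_preimage_add_right]
      exact h0
    simp [hz]
  have hsym := Measure.prod_apply_symm (μ := (volume : Measure ℝ)) (ν := (volume : Measure E)) hAm
  rw [hprod] at hsym
  have hmeas : Measurable fun x : E => (volume : Measure ℝ) ((fun t : ℝ => (t, x)) ⁻¹' A) :=
    measurable_measure_prodMk_right hAm
  have hz := (lintegral_eq_zero_iff hmeas).mp hsym.symm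
  filter_upwards [hz] with x hx
  have he : (fun t : ℝ => (t, x)) ⁻¹' A = {t : ℝ | x + t • v ∈ S} := rfl
  rwa [he] at hx

end Stmt8Aux

open Stmt8Aux in
/-- Line-integration construction of a potential `g` with `∇_v g = h`, with uniform
bounds on `g` and its derivatives from the thin support of `h` along lines parallel to `v`. -/
theorem stmt_8 (n : ℕ) (h : EuclideanSpace ℝ (Fin (n + 1)) → ℝ)
    (hcont : Continuous h) (hsupp : HasCompactSupport h)
    (v : EuclideanSpace ℝ (Fin (n + 1))) (hv : ‖v‖ = 1)
    (m : ℝ) (hm : 0 < m)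
    (hline : ∀ x, volume {t : ℝ | h (x + t • v) ≠ 0} ≤ ENNReal.ofReal m)
    (g : EuclideanSpace ℝ (Fin (n + 1)) → ℝ)
    (hg : ∀ x, g x = ∫ t in Set.Iio (0 : ℝ), h (x + t • v)) :
    (∀ x, IntegrableOn (fun t : ℝ => h (x + t • v)) (Set.Iio 0)) ∧
    (∀ x, lineDeriv ℝ g x v = h x) ∧
    (∀ x, |g x| ≤ m * sSup (Set.range fun y => |h y|)) ∧
    (∀ (j : ℕ), ContDiff ℝ j h →
      ∀ x, ‖iteratedFDeriv ℝ j g x‖ ≤ m * sSup (Set.range fun y => ‖iteratedFDeriv ℝ j h y‖)) := by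
  refine ⟨fun x => (line_integrable h hcont hsupp hv x).integrableOn, ?_, ?_, ?_⟩
  · -- lineDeriv
    intro x
    have hInt : Integrable (fun t : ℝ => h (x + t • v)) := line_integrable h hcont hsupp hv x
    have hFc : Continuous fun t : ℝ => h (x + t • v) := hcont.comp (by continuity)
    have key : ∀ s : ℝ, g (x + s • v)
        = (∫ t in Set.Iic (0:ℝ), h (x + t • v)) + ∫ u in (0:ℝ)..s, h (x + u • v) := by
      intro s
      have h1 : (fun t : ℝ => h (x + s • v + t • v)) = fun t : ℝ => h (x + (s + t) • v) := by
        funext t; rw [add_smul, add_assoc]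
      have h2 : (∫ t in Set.Iio (0:ℝ), h (x + (s + t) • v))
          = ∫ t in Set.Iio s, h (x + t • v) := by
        have hmp : MeasurePreserving (fun t : ℝ => s + t) volume volume :=
          measurePreserving_add_left volume s
        have hemb : MeasurableEmbedding (fun t : ℝ => s + t) := by
          simpa using (MeasurableEquiv.addLeft s).measurableEmbedding
        have hpre : (fun t : ℝ => s + t) ⁻¹' (Set.Iio s) = Set.Iio 0 := by
          ext t; simp
        have hchg := hmp.setIntegral_preimage_emb hemb (fun u : ℝ => h (x + u • v)) (Set.Iio s)
        rw [hpre] at hchg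
        exact hchg
      have h3 : (∫ t in Set.Iio s, h (x + t • v)) = ∫ t in Set.Iic s, h (x + t • v) :=
        setIntegral_congr_set Iio_ae_eq_Iic
      have h4 := intervalIntegral.integral_Iic_sub_Iic (f := fun t : ℝ => h (x + t • v))
        (μ := volume) (a := 0) (b := s) hInt.integrableOn hInt.integrableOn
      rw [hg, h1, h2, h3]
      linarith
    have heq : (fun s : ℝ => g (x + s • v))
        = fun s : ℝ => (∫ t in Set.Iic (0:ℝ), h (x + t • v))
          + ∫ u in (0:ℝ)..s, h (x + u • v) := funext key
    have h5 : HasDerivAt (fun s : ℝ => ∫ u in (0:ℝ)..s, h (x + u • v))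
        (h (x + (0:ℝ) • v)) 0 :=
      intervalIntegral.integral_hasDerivAt_right hInt.intervalIntegrable
        ⟨Set.univ, univ_mem, hFc.aestronglyMeasurable.restrict⟩ hFc.continuousAt
    have h6 : h (x + (0:ℝ) • v) = h x := by norm_num
    have hder : HasDerivAt (fun s : ℝ => g (x + s • v)) (h x) 0 := by
      rw [heq]
      simpa [h6] using h5.const_add (∫ t in Set.Iic (0:ℝ), h (x + t • v))
    have hld : lineDeriv ℝ g x v = deriv (fun t : ℝ => g (x + t • v)) 0 := rfl
    rw [hld]
    exact hder.deriv
  · -- sup bound for g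
    intro x
    have hb := L2 h hcont hsupp x hv hm.le (hline x)
    rw [hg x]
    calc |∫ t in Set.Iio (0:ℝ), h (x + t • v)|
        = ‖∫ t in Set.Iio (0:ℝ), h (x + t • v)‖ := (Real.norm_eq_abs _).symm
      _ ≤ m * sSup (Set.range fun y => ‖h y‖) := hb
      _ = m * sSup (Set.range fun y => |h y|) := rfl
  · -- derivatives
    intro j hj x
    have hgG : g = fun y => ∫ t in Set.Iio (0:ℝ), h (y + t • v) := funext hg
    set M := sSup (Set.range fun y => ‖iteratedFDeriv ℝ j h y‖) with hM
    set N : Set (EuclideanSpace ℝ (Fin (n+1))) :=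
      {p | h p = 0 ∧ ∃ k ≤ j, iteratedFDeriv ℝ k h p ≠ 0} with hN
    have hNnull : volume N = 0 := L7 h j hj
    have hNm : MeasurableSet N := by
      have h1 : N = {p | h p = 0} ∩
          ⋃ k ∈ Finset.range (j+1), {p | iteratedFDeriv ℝ k h p ≠ 0} := by
        ext p
        simp only [hN, Set.mem_setOf_eq, Set.mem_inter_iff, Set.mem_iUnion,
          Finset.mem_range, Nat.lt_succ_iff, exists_prop]
      rw [h1]
      refine ((isClosed_eq hcont continuous_const).measurableSet).inter ?_
      refine MeasurableSet.biUnion (Finset.range (j+1)).countable_toSet fun k hk => ?_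
      have hck : Continuous (iteratedFDeriv ℝ k h) := by
        refine hj.continuous_iteratedFDeriv ?_
        have hkle : k ≤ j := Nat.lt_succ_iff.mp (Finset.mem_range.mp (Finset.mem_coe.mp hk))
        exact_mod_cast hkle
      exact ((isClosed_eq hck continuous_const).measurableSet).compl
    have hae := L8 N hNm hNnull v
    have hjc : Continuous (iteratedFDeriv ℝ j h) := hj.continuous_iteratedFDeriv le_rfl
    have hjs : HasCompactSupport (iteratedFDeriv ℝ j h) := hsupp.iteratedFDeriv j
    have haebound : ∀ᵐ x' : EuclideanSpace ℝ (Fin (n+1)),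
        ‖iteratedFDeriv ℝ j g x'‖ ≤ m * M := by
      filter_upwards [hae] with x' hx'
      have hform : iteratedFDeriv ℝ j g x'
          = ∫ t in Set.Iio (0:ℝ), iteratedFDeriv ℝ j h (x' + t • v) := by
        rw [hgG]; exact L4 hv j ℝ h hj hsupp x'
      rw [hform]
      refine L2 (iteratedFDeriv ℝ j h) hjc hjs x' hv hm.le ?_
      have hsubset : {t : ℝ | iteratedFDeriv ℝ j h (x' + t • v) ≠ 0}
          ⊆ {t : ℝ | h (x' + t • v) ≠ 0} ∪ {t : ℝ | x' + t • v ∈ N} := by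
        intro t ht
        by_cases hh0 : h (x' + t • v) = 0
        · exact Or.inr ⟨hh0, j, le_rfl, ht⟩
        · exact Or.inl hh0
      calc volume {t : ℝ | iteratedFDeriv ℝ j h (x' + t • v) ≠ 0}
          ≤ volume ({t : ℝ | h (x' + t • v) ≠ 0} ∪ {t : ℝ | x' + t • v ∈ N}) :=
            measure_mono hsubset
        _ ≤ volume {t : ℝ | h (x' + t • v) ≠ 0} + volume {t : ℝ | x' + t • v ∈ N} :=
            measure_union_le _ _
        _ ≤ ENNReal.ofReal m + 0 := add_le_add (hline x') (le_of_eq hx')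
        _ = ENNReal.ofReal m := add_zero _
    have hcontj : Continuous fun x' : EuclideanSpace ℝ (Fin (n+1)) =>
        ‖iteratedFDeriv ℝ j g x'‖ := by
      have hfun : (fun x' : EuclideanSpace ℝ (Fin (n+1)) => iteratedFDeriv ℝ j g x')
          = fun x' => ∫ t in Set.Iio (0:ℝ), iteratedFDeriv ℝ j h (x' + t • v) := by
        funext x'
        rw [hgG]; exact L4 hv j ℝ h hj hsupp x'
      have : Continuous fun x' : EuclideanSpace ℝ (Fin (n+1)) =>
          ∫ t in Set.Iio (0:ℝ), iteratedFDeriv ℝ j h (x' + t • v) :=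
        L5 (iteratedFDeriv ℝ j h) hjc hjs hv
      rw [show (fun x' : EuclideanSpace ℝ (Fin (n+1)) => ‖iteratedFDeriv ℝ j g x'‖)
        = fun x' => ‖∫ t in Set.Iio (0:ℝ), iteratedFDeriv ℝ j h (x' + t • v)‖ from
        funext fun x' => by rw [congrFun hfun x']]
      exact this.norm
    by_contra hx
    have hCc : IsClosed {x' : EuclideanSpace ℝ (Fin (n+1)) |
        ‖iteratedFDeriv ℝ j g x'‖ ≤ m * M} := isClosed_le hcontj continuous_const
    have hnull : volume {x' : EuclideanSpace ℝ (Fin (n+1)) |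
        ‖iteratedFDeriv ℝ j g x'‖ ≤ m * M}ᶜ = 0 := by
      have := ae_iff.mp haebound
      simpa [Set.compl_setOf] using this
    have hpos := (hCc.isOpen_compl).measure_pos volume ⟨x, hx⟩
    exact absurd hnull hpos.ne'
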